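/- The Prabhakar kernel spectral function K_{α,β}^γ(r) = r^{αγ-β} sin(γ θ_α(r) + (β - αγ)π) / [π (r^{2α} + 2 r^α cos(απ) + 1)^{γ/2}], with θ_α(r) = arctan(r^α sin(πα)/(r^α cos(πα) + 1)) chosen in [0, π], is nonnegative for all r ≥ 0 whenever 0 < α ≤ 1 and 0 < αγ ≤ β ≤ 1. -/

import Mathlib

open scoped Real

/-- The continuous branch `θ_α(r) ∈ [0, π]` of
`arctan (r^α sin(πα) / (r^α cos(πα) + 1))`, realized as the argument of the complex number
`(r^α cos(πα) + 1) + i r^α sin(πα)`. -/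
noncomputable def thetaBranch (α r : ℝ) : ℝ :=
  Complex.arg ((r ^ α * Real.cos (π * α) + 1 : ℝ) + (r ^ α * Real.sin (π * α) : ℝ) * Complex.I)

/-- The Prabhakar spectral function `K_{α,β}^γ(r)`. -/
noncomputable def prabhakarSpectral (α β γ r : ℝ) : ℝ :=
  r ^ (α * γ - β) * Real.sin (γ * thetaBranch α r + (β - α * γ) * π) /
    (π * (r ^ (2 * α) + 2 * r ^ α * Real.cos (α * π) + 1) ^ (γ / 2))

lemma thetaBranch_mem (α r : ℝ) (hα0 : 0 < α) (hα1 : α ≤ 1) (hr : 0 ≤ r) :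
    0 ≤ thetaBranch α r ∧ thetaBranch α r ≤ α * π := by
  have hx : (0:ℝ) ≤ r ^ α := Real.rpow_nonneg hr α
  have hπα0 : 0 ≤ π * α := mul_nonneg Real.pi_pos.le hα0.le
  have hπα1 : π * α ≤ π := by nlinarith [Real.pi_pos]
  have hs : 0 ≤ Real.sin (π * α) := Real.sin_nonneg_of_nonneg_of_le_pi hπα0 hπα1
  set z : ℂ := ((r ^ α * Real.cos (π * α) + 1 : ℝ) + (r ^ α * Real.sin (π * α) : ℝ) * Complex.I)
    with hz
  have hre : z.re = r ^ α * Real.cos (π * α) + 1 := by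
    rw [hz]
    simp only [Complex.add_re, Complex.ofReal_re, Complex.mul_re, Complex.I_re, Complex.I_im,
      Complex.ofReal_im]
    ring
  have him : z.im = r ^ α * Real.sin (π * α) := by
    rw [hz]
    simp only [Complex.add_im, Complex.ofReal_im, Complex.mul_im, Complex.I_re, Complex.I_im,
      Complex.ofReal_re]
    ring
  by_cases h0 : z = 0
  · constructor
    · rw [thetaBranch, ← hz, h0, Complex.arg_zero]
    · rw [thetaBranch, ← hz, h0, Complex.arg_zero]
      positivity
  · have himn : 0 ≤ z.im := by rw [him]; exact mul_nonneg hx hs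
    have hθ0 : 0 ≤ thetaBranch α r := by
      rw [thetaBranch, ← hz]
      exact Complex.arg_nonneg_iff.mpr himn
    refine ⟨hθ0, ?_⟩
    have hθπ : thetaBranch α r ≤ π := by
      rw [thetaBranch, ← hz]; exact Complex.arg_le_pi z
    have habs : 0 < ‖z‖ := by
      simpa using (norm_pos_iff.mpr h0)
    have hsinθ : Real.sin (thetaBranch α r) = z.im / ‖z‖ := by
      rw [thetaBranch, ← hz]; exact Complex.sin_arg z
    have hcosθ : Real.cos (thetaBranch α r) = z.re / ‖z‖ := by
      rw [thetaBranch, ← hz]; exact Complex.cos_arg h0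
    have key : 0 ≤ Real.sin (α * π - thetaBranch α r) := by
      rw [Real.sin_sub, hsinθ, hcosθ, hre, him, mul_comm α π]
      have heq : Real.sin (π * α) * ((r ^ α * Real.cos (π * α) + 1) / ‖z‖) -
          Real.cos (π * α) * (r ^ α * Real.sin (π * α) / ‖z‖)
          = Real.sin (π * α) / ‖z‖ := by
        field_simp
        ring
      rw [heq]
      positivity
    by_contra hlt
    push_neg at hlt
    have h1 : α * π - thetaBranch α r < 0 := by linarith
    have h2 : -π < α * π - thetaBranch α r := by nlinarith [Real.pi_pos]
    have := Real.sin_neg_of_neg_of_neg_pi_lt h1 h2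
    linarith

/-- For `0 < α ≤ 1` and `0 < αγ ≤ β ≤ 1` the spectral function `K_{α,β}^γ(r)` is nonnegative
for all `r ≥ 0`. -/
theorem prabhakarSpectral_nonneg (α β γ : ℝ)
    (hα0 : 0 < α) (hα1 : α ≤ 1) (hγ : 0 < α * γ) (hγβ : α * γ ≤ β) (hβ : β ≤ 1) :
    ∀ r : ℝ, 0 ≤ r → 0 ≤ prabhakarSpectral α β γ r := by
  intro r hr
  have hγ0 : 0 < γ := by
    rcases mul_pos_iff.mp hγ with ⟨_, h⟩ | ⟨h, _⟩
    · exact h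
    · linarith
  obtain ⟨hθ0, hθπ⟩ := thetaBranch_mem α r hα0 hα1 hr
  unfold prabhakarSpectral
  apply div_nonneg
  · apply mul_nonneg (Real.rpow_nonneg hr _)
    apply Real.sin_nonneg_of_nonneg_of_le_pi
    · have h1 : 0 ≤ γ * thetaBranch α r := mul_nonneg hγ0.le hθ0
      have h2 : 0 ≤ (β - α * γ) * π := mul_nonneg (by linarith) Real.pi_pos.le
      linarith
    · have h1 : γ * thetaBranch α r ≤ γ * (α * π) :=
        mul_le_mul_of_nonneg_left hθπ hγ0.le
      nlinarith [Real.pi_pos]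
  · apply mul_nonneg Real.pi_pos.le
    apply Real.rpow_nonneg
    have h2 : r ^ (2 * α) = (r ^ α) ^ 2 := by
      rw [mul_comm, Real.rpow_mul hr, Real.rpow_two]
    rw [h2]
    nlinarith [Real.sin_sq_add_cos_sq (α * π), sq_nonneg (r ^ α + Real.cos (α * π))]
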